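/- (Spine-membership characterization used in SLD-Merge.) Let v be a vertex of T incident to at least one edge, and let e* be the minimum-rank edge incident to v. For every edge e of T, e ∈ spine(e*) if and only if every edge lying on the tree path from e to v (excluding e itself) has rank less than r(e). -/

import Mathlib

/- Single tree setting: `G` is a finite tree with injective edge ranks `r`.
`edgesBetween G e f` is the set of edges strictly between edges `e` and `f`
on the unique tree path connecting them (an edge `g ∉ {e,f}` lies on this path
iff it belongs to every walk containing both `e` and `f`). -/

open SimpleGraph

variable {V : Type*}

/-- The set of edges lying strictly between edges `e` and `f` on the tree path
connecting them (excluding `e` and `f`). -/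
def edgesBetween (G : SimpleGraph V) (e f : Sym2 V) : Set (Sym2 V) :=
  {g | g ∈ G.edgeSet ∧ g ≠ e ∧ g ≠ f ∧
    ∀ (a b : V) (w : G.Walk a b), e ∈ w.edges → f ∈ w.edges → g ∈ w.edges}

/-- `f` is an adjacent superior of `e`: `r e < r f` and every edge `g` on the
path between `e` and `f` satisfies `r g < r e`. -/
def AdjSup (G : SimpleGraph V) (r : Sym2 V → ℕ) (e f : Sym2 V) : Prop :=
  f ∈ G.edgeSet ∧ r e < r f ∧ ∀ g ∈ edgesBetween G e f, r g < r e

/-- `f` is an adjacent inferior of `e`: `r f < r e` and every edge `g` on the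
path between `e` and `f` satisfies `r g < r e`. -/
def AdjInf (G : SimpleGraph V) (r : Sym2 V → ℕ) (e f : Sym2 V) : Prop :=
  f ∈ G.edgeSet ∧ r f < r e ∧ ∀ g ∈ edgesBetween G e f, r g < r e

/-- `f` is the SLD parent of `e`: the minimum-rank adjacent superior of `e`. -/
def IsParent (G : SimpleGraph V) (r : Sym2 V → ℕ) (e f : Sym2 V) : Prop :=
  AdjSup G r e f ∧ ∀ g, AdjSup G r e g → r f ≤ r g

/-- The spine of `e`: the set of edges obtained by iterating the SLD parent
function starting from `e` (including `e` itself). -/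
def spine (G : SimpleGraph V) (r : Sym2 V → ℕ) (e : Sym2 V) : Set (Sym2 V) :=
  {f | Relation.ReflTransGen (IsParent G r) e f}

/-- Edge `f` lies on the `u`-side of edge `e` (strictly closer to `u`):
`f` is reachable from `u` by a walk avoiding `e`. -/
def OnSide (G : SimpleGraph V) (e : Sym2 V) (u : V) (f : Sym2 V) : Prop :=
  ∃ (x : V) (w : G.Walk u x), f ∈ w.edges ∧ e ∉ w.edges

/-- Edges lying on the tree path from edge `f` to vertex `u`, excluding `f`
itself: the edges `g ≠ f` belonging to every walk from `u` containing `f`. -/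
def edgesBetweenEV (G : SimpleGraph V) (f : Sym2 V) (u : V) : Set (Sym2 V) :=
  {g | g ∈ G.edgeSet ∧ g ≠ f ∧ ∀ (x : V) (w : G.Walk u x), f ∈ w.edges → g ∈ w.edges}

namespace SLDaux
open Walk

variable {V : Type*} {G : SimpleGraph V}

/-- `x` and `y` are separated by removing edge `g`. -/
def Sep (G : SimpleGraph V) (g : Sym2 V) (x y : V) : Prop :=
  ¬ (G.deleteEdges {g}).Reachable x y

lemma not_sep_refl (g : Sym2 V) (x : V) : ¬ Sep G g x x := fun h => h (Reachable.refl x)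

lemma sep_symm {g : Sym2 V} {x y : V} (h : Sep G g x y) : Sep G g y x := fun h' => h h'.symm

lemma not_sep_symm {g : Sym2 V} {x y : V} (h : ¬ Sep G g x y) : ¬ Sep G g y x := by
  simp only [Sep, not_not] at *; exact h.symm

lemma not_sep_trans {g : Sym2 V} {x y z : V} (h1 : ¬ Sep G g x y) (h2 : ¬ Sep G g y z) :
    ¬ Sep G g x z := by
  simp only [Sep, not_not] at *; exact h1.trans h2

lemma sep_of_sep_left {g : Sym2 V} {x y z : V} (h1 : Sep G g x z) (h2 : ¬ Sep G g x y) :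
    Sep G g y z := fun h => h1 ((not_not.mp h2).trans h)

/-- Crossing: a separated pair forces the edge onto every walk. -/
lemma mem_edges_of_sep {g : Sym2 V} {x y : V} (w : G.Walk x y) (h : Sep G g x y) :
    g ∈ w.edges := by
  by_contra hg
  exact h ⟨w.toDeleteEdges {g} (by intro e he; simp; rintro rfl; exact hg he)⟩

lemma not_sep_of_adj {g : Sym2 V} {a b : V} (hne : s(a,b) ≠ g) (hadj : G.Adj a b) :
    ¬ Sep G g a b := by
  intro h
  exact h (SimpleGraph.Adj.reachable (by simp [hne, hadj]))

/-- Endpoints of an edge different from `g` are not separated by `g`. -/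
lemma not_sep_of_mem_edge {g h : Sym2 V} {x y : V} (hE : h ∈ G.edgeSet) (hne : h ≠ g)
    (hx : x ∈ h) (hy : y ∈ h) : ¬ Sep G g x y := by
  induction h using Sym2.ind with
  | _ a b =>
    rw [Sym2.mem_iff] at hx hy
    have hadj : G.Adj a b := hE
    rcases hx with rfl | rfl <;> rcases hy with rfl | rfl
    · exact not_sep_refl _ _
    · exact not_sep_of_adj hne hadj
    · exact not_sep_of_adj (by rwa [Sym2.eq_swap]) hadj.symm
    · exact not_sep_refl _ _

lemma reach_side_aux {p q x y : V} (w : G.Walk x y)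
    (hy : ¬ Sep G (s(p,q)) y p ∨ ¬ Sep G (s(p,q)) y q) :
    ¬ Sep G (s(p,q)) x p ∨ ¬ Sep G (s(p,q)) x q := by
  induction w with
  | nil => exact hy
  | @cons x b _ hadj w ih =>
    have ih := ih hy
    by_cases hE : s(x, b) = s(p,q)
    · rw [Sym2.eq_iff] at hE
      rcases hE with ⟨rfl, rfl⟩ | ⟨rfl, rfl⟩
      · exact Or.inl (not_sep_refl _ _)
      · exact Or.inr (not_sep_refl _ _)
    · have hxb : ¬ Sep G (s(p,q)) x b := not_sep_of_adj hE hadj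
      rcases ih with h | h
      · exact Or.inl (not_sep_trans hxb h)
      · exact Or.inr (not_sep_trans hxb h)

lemma reach_side (hc : G.Connected) (p q x : V) :
    ¬ Sep G (s(p,q)) x p ∨ ¬ Sep G (s(p,q)) x q := by
  obtain ⟨w⟩ := hc.preconnected x p
  exact reach_side_aux w (Or.inl (not_sep_refl _ _))

/-- Only two sides: if `x` is separated from both `y` and `z`, then `y,z` are together. -/
lemma two_sides (hc : G.Connected) {g : Sym2 V} {x y z : V}
    (hxy : Sep G g x y) (hxz : Sep G g x z) : ¬ Sep G g y z := by
  induction g using Sym2.ind with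
  | _ p q =>
    rcases reach_side hc p q x with hx | hx <;>
      rcases reach_side hc p q y with hy | hy <;>
      rcases reach_side hc p q z with hz | hz
    · exact absurd hxy (not_sep_trans hx (not_sep_symm hy))
    · exact absurd hxy (not_sep_trans hx (not_sep_symm hy))
    · exact absurd hxz (not_sep_trans hx (not_sep_symm hz))
    · exact not_sep_trans hy (not_sep_symm hz)
    · exact not_sep_trans hy (not_sep_symm hz)
    · exact absurd hxz (not_sep_trans hx (not_sep_symm hz))
    · exact absurd hxy (not_sep_trans hx (not_sep_symm hy))
    · exact absurd hxy (not_sep_trans hx (not_sep_symm hy))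

/-- In an acyclic graph, deleting an edge separates its endpoints. -/
lemma sep_self (ha : G.IsAcyclic) {a b : V} (hadj : G.Adj a b) : Sep G (s(a,b)) a b := by
  have := (isAcyclic_iff_forall_adj_isBridge.mp ha) hadj
  rw [isBridge_iff] at this
  exact this



variable {V : Type*} {G : SimpleGraph V}

lemma mem_support_of_mem_edges' {g : Sym2 V} {x y p : V} (w : G.Walk x y)
    (hg : g ∈ w.edges) (hp : p ∈ g) : p ∈ w.support := by
  induction g using Sym2.ind with
  | _ a b =>
    rw [Sym2.mem_iff] at hp
    rcases hp with rfl | rfl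
    · exact w.fst_mem_support_of_mem_edges hg
    · exact w.snd_mem_support_of_mem_edges hg

/-- A walk whose support contains two separated vertices must cross the edge. -/
lemma mem_edges_of_sep_support {g : Sym2 V} {x y a c : V} (w : G.Walk x y)
    (ha : a ∈ w.support) (hc : c ∈ w.support) (hsep : Sep G g a c) : g ∈ w.edges := by
  classical
  by_contra hg
  have h1 : ¬ Sep G g x a := by
    intro h
    exact hg (w.edges_takeUntil_subset ha (mem_edges_of_sep _ h))
  have h2 : ¬ Sep G g x c := by
    intro h
    exact hg (w.edges_takeUntil_subset hc (mem_edges_of_sep _ h))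
  exact (not_sep_trans (not_sep_symm h1) h2) hsep

/-- Three-point lemma: `p` is forced onto the path from `x` to `y` (since it is an
endpoint of an edge separating them), yet `g` separates `p` from both `x` and `y`:
impossible, since `g` would occur twice on a path. -/
lemma three_point (hc : G.Connected) {fi g : Sym2 V} {x y p : V}
    (hp : p ∈ fi) (hxy : Sep G fi x y) (h1 : Sep G g x p) (h2 : Sep G g p y) : False := by
  classical
  obtain ⟨w0⟩ := hc.preconnected x y
  obtain ⟨w, hw⟩ := w0.toPath
  have hfiw : fi ∈ w.edges := mem_edges_of_sep w hxy
  have hps : p ∈ w.support := mem_support_of_mem_edges' w hfiw hp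
  have h1' : g ∈ (w.takeUntil p hps).edges := mem_edges_of_sep _ h1
  have h2' : g ∈ (w.dropUntil p hps).edges := mem_edges_of_sep _ h2
  have hnd : w.edges.Nodup := hw.isTrail.edges_nodup
  rw [← w.take_spec hps, edges_append, List.nodup_append] at hnd
  exact hnd.2.2 _ h1' _ h2' rfl



variable {V : Type*} {G : SimpleGraph V}

lemma mem_edgesBetweenEV_iff (hc : G.Connected) {e : Sym2 V} (he : e ∈ G.edgeSet) (v : V)
    {g : Sym2 V} :
    g ∈ edgesBetweenEV G e v ↔ g ∈ G.edgeSet ∧ g ≠ e ∧ ∀ a ∈ e, Sep G g v a := by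
  constructor
  · rintro ⟨hgE, hge, hall⟩
    refine ⟨hgE, hge, ?_⟩
    intro a ha
    by_contra hsep
    rw [Sep, not_not] at hsep
    obtain ⟨w0⟩ := hsep
    have hsub : ∀ e' ∈ w0.edges, e' ∈ G.edgeSet := fun e' h' => by
      have := w0.edges_subset_edgeSet h'
      rw [edgeSet_deleteEdges] at this; exact this.1
    have hgw1 : g ∉ (w0.transfer G hsub).edges := by
      rw [Walk.edges_transfer]
      intro h'
      have := w0.edges_subset_edgeSet h'
      rw [edgeSet_deleteEdges] at this
      exact this.2 rfl
    have hadj : G.Adj a (Sym2.Mem.other ha) := by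
      rw [← SimpleGraph.mem_edgeSet, Sym2.other_spec ha]; exact he
    have hew2 : e ∈ ((w0.transfer G hsub).concat hadj).edges := by
      rw [Walk.edges_concat, List.concat_eq_append, List.mem_append, List.mem_singleton]
      right; rw [Sym2.other_spec ha]
    have := hall _ _ hew2
    rw [Walk.edges_concat, List.concat_eq_append, List.mem_append, List.mem_singleton] at this
    rcases this with hx | hx
    · exact hgw1 hx
    · rw [Sym2.other_spec ha] at hx
      exact hge hx
  · rintro ⟨hgE, hge, hsep⟩
    refine ⟨hgE, hge, ?_⟩
    intro x w hew
    classical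
    have haE : e.out.1 ∈ e := Sym2.out_fst_mem e
    have haw : e.out.1 ∈ w.support := mem_support_of_mem_edges' w hew haE
    exact w.edges_takeUntil_subset haw (mem_edges_of_sep _ (hsep _ haE))

lemma mem_edgesBetween_iff (hc : G.Connected) {e f : Sym2 V} (he : e ∈ G.edgeSet)
    (hf : f ∈ G.edgeSet) {g : Sym2 V} :
    g ∈ edgesBetween G e f ↔
      g ∈ G.edgeSet ∧ g ≠ e ∧ g ≠ f ∧ ∀ a ∈ e, ∀ c ∈ f, Sep G g a c := by
  constructor
  · rintro ⟨hgE, hge, hgf, hall⟩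
    refine ⟨hgE, hge, hgf, ?_⟩
    intro a ha c hcf
    by_contra hsep
    rw [Sep, not_not] at hsep
    obtain ⟨w0⟩ := hsep
    have hsub : ∀ e' ∈ w0.edges, e' ∈ G.edgeSet := fun e' h' => by
      have := w0.edges_subset_edgeSet h'
      rw [edgeSet_deleteEdges] at this; exact this.1
    have hgw1 : g ∉ (w0.transfer G hsub).edges := by
      rw [Walk.edges_transfer]
      intro h'
      have := w0.edges_subset_edgeSet h'
      rw [edgeSet_deleteEdges] at this
      exact this.2 rfl
    have hadjE : G.Adj a (Sym2.Mem.other ha) := by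
      rw [← SimpleGraph.mem_edgeSet, Sym2.other_spec ha]; exact he
    have hadjF : G.Adj c (Sym2.Mem.other hcf) := by
      rw [← SimpleGraph.mem_edgeSet, Sym2.other_spec hcf]; exact hf
    set w2 := Walk.cons hadjE.symm ((w0.transfer G hsub).concat hadjF) with hw2
    have hedges : w2.edges = s(Sym2.Mem.other ha, a) ::
        ((w0.transfer G hsub).edges ++ [s(c, Sym2.Mem.other hcf)]) := by
      rw [hw2, Walk.edges_cons, Walk.edges_concat, List.concat_eq_append]
    have hew2 : e ∈ w2.edges := by
      rw [hedges, List.mem_cons]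
      left; rw [Sym2.eq_swap, Sym2.other_spec ha]
    have hfw2 : f ∈ w2.edges := by
      rw [hedges, List.mem_cons, List.mem_append, List.mem_singleton]
      right; right; rw [Sym2.other_spec hcf]
    have := hall _ _ w2 hew2 hfw2
    rw [hedges, List.mem_cons, List.mem_append, List.mem_singleton] at this
    rcases this with hx | hx | hx
    · rw [Sym2.eq_swap, Sym2.other_spec ha] at hx; exact hge hx
    · exact hgw1 hx
    · rw [Sym2.other_spec hcf] at hx; exact hgf hx
  · rintro ⟨hgE, hge, hgf, hsep⟩
    refine ⟨hgE, hge, hgf, ?_⟩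
    intro x y w hew hfw
    have haE : e.out.1 ∈ e := Sym2.out_fst_mem e
    have hcF : f.out.1 ∈ f := Sym2.out_fst_mem f
    exact mem_edges_of_sep_support w (mem_support_of_mem_edges' w hew haE)
      (mem_support_of_mem_edges' w hfw hcF) (hsep _ haE _ hcF)



variable {V : Type*} {G : SimpleGraph V}

lemma finite_sym2 [Fintype V] : Finite (Sym2 V) := by
  have : Finite (V × V) := Finite.of_fintype _
  exact Finite.of_surjective (fun p : V × V => s(p.1, p.2))
    (fun z => z.ind (fun a b => ⟨(a, b), rfl⟩))

/-- Both endpoints of an edge are separated by deleting it (acyclic case). -/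
lemma sep_self' (ha : G.IsAcyclic) {e : Sym2 V} (he : e ∈ G.edgeSet) :
    ∃ c ∈ e, ∃ c' ∈ e, Sep G e c c' := by
  induction e using Sym2.ind with
  | _ a b =>
    exact ⟨a, Sym2.mem_mk_left a b, b, Sym2.mem_mk_right a b, sep_self ha he⟩

/-- Pair closure: separation of one endpoint pair propagates to all endpoint pairs. -/
lemma sep_pair_closure {g e f : Sym2 V} (he : e ∈ G.edgeSet) (hf : f ∈ G.edgeSet)
    (hge : g ≠ e) (hgf : g ≠ f) {p q : V} (hp : p ∈ e) (hq : q ∈ f)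
    (hsep : Sep G g p q) : ∀ a ∈ e, ∀ c ∈ f, Sep G g a c := by
  intro a ha c hc
  by_contra hnot
  have hnot' : ¬ Sep G g a c := hnot
  have h1 : ¬ Sep G g p a := not_sep_of_mem_edge he (fun h => hge h.symm) hp ha
  have h2 : ¬ Sep G g c q := not_sep_of_mem_edge hf (fun h => hgf h.symm) hc hq
  exact (not_sep_trans (not_sep_trans h1 hnot') h2) hsep

lemma sep_vertex_closure {g e : Sym2 V} (he : e ∈ G.edgeSet) (hge : g ≠ e)
    {v p : V} (hp : p ∈ e) (hsep : Sep G g v p) : ∀ a ∈ e, Sep G g v a := by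
  intro a ha
  by_contra hnot
  have hnot' : ¬ Sep G g v a := hnot
  have h1 : ¬ Sep G g a p := not_sep_of_mem_edge he (fun h => hge h.symm) ha hp
  exact (not_sep_trans hnot' h1) hsep



variable {V : Type*} {G : SimpleGraph V}

/-- If `v` is not an endpoint of `e`, there is an edge separating `v` from `e`. -/
lemma first_edge (hT : G.IsTree) {e : Sym2 V} (he : e ∈ G.edgeSet) {v : V} (hv : v ∉ e) :
    ∃ f0, f0 ∈ G.edgeSet ∧ f0 ≠ e ∧ ∀ a ∈ e, Sep G f0 v a := by
  classical
  have hc := hT.isConnected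
  have haE : e.out.1 ∈ e := Sym2.out_fst_mem e
  have hva : v ≠ e.out.1 := fun h => hv (h ▸ haE)
  obtain ⟨w0⟩ := hc.preconnected v e.out.1
  obtain ⟨w, hw⟩ := w0.toPath
  cases w with
  | nil => exact absurd rfl hva
  | @cons _ b _ hadj w' =>
    have hf0e : s(v, b) ≠ e := fun h => hv (h ▸ Sym2.mem_mk_left v b)
    have hsep : Sep G s(v,b) v e.out.1 := by
      intro hreach
      obtain ⟨q0⟩ := hreach
      obtain ⟨q, hq⟩ := q0.toPath
      have hsub : ∀ e' ∈ q.edges, e' ∈ G.edgeSet := fun e' h' => by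
        have := q.edges_subset_edgeSet h'
        rw [edgeSet_deleteEdges] at this; exact this.1
      have hqt : (q.transfer G hsub).IsPath := hq.transfer hsub
      obtain ⟨p, -, huniq⟩ := hT.existsUnique_path v e.out.1
      have h1 := huniq _ hw
      have h2 := huniq _ hqt
      have hmem : s(v, b) ∈ (Walk.cons hadj w').edges := by
        rw [Walk.edges_cons]; exact List.mem_cons_self
      rw [h1, ← h2] at hmem
      rw [Walk.edges_transfer] at hmem
      have := q.edges_subset_edgeSet hmem
      rw [edgeSet_deleteEdges] at this
      exact this.2 rfl
    exact ⟨s(v, b), G.mem_edgeSet.mpr hadj, hf0e,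
      sep_vertex_closure he hf0e haE hsep⟩



variable {V : Type*} {G : SimpleGraph V}

/-- If `fi` separates `v` from `e` and `h'` separates `v` from `fi`, then `h'`
separates `v` from `e` (and `h' ≠ e`). -/
lemma btwv_step (hT : G.IsTree) {e fi h' : Sym2 V} {v : V}
    (he : e ∈ G.edgeSet)
    (hfi_sep : ∀ c ∈ e, Sep G fi v c)
    (hh'_sep : ∀ p ∈ fi, Sep G h' v p) :
    h' ≠ e ∧ ∀ c ∈ e, Sep G h' v c := by
  have hc := hT.isConnected
  have hp : fi.out.1 ∈ fi := Sym2.out_fst_mem fi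
  constructor
  · rintro rfl
    obtain ⟨c, hce, c', hc'e, hscc⟩ := sep_self' hT.IsAcyclic he
    have hvp : Sep G h' v fi.out.1 := hh'_sep _ hp
    have : Sep G h' fi.out.1 c ∨ Sep G h' fi.out.1 c' := by
      by_contra hcon
      push_neg at hcon
      exact (not_sep_trans (not_sep_symm hcon.1) hcon.2) hscc
    rcases this with hs | hs
    · exact three_point hc hp (hfi_sep c hce) hvp hs
    · exact three_point hc hp (hfi_sep c' hc'e) hvp hs
  · intro c hce
    by_contra hnot
    have hvp : Sep G h' v fi.out.1 := hh'_sep _ hp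
    exact three_point hc hp (hfi_sep c hce) hvp (sep_symm (sep_of_sep_left hvp hnot))

/-- If `fi` separates `v` from `e` and `g'` separates `fi` from `e`, then `g'`
separates `v` from `e`. -/
lemma btwv_of_between (hT : G.IsTree) {e fi g' : Sym2 V} {v : V}
    (hfi_sep : ∀ c ∈ e, Sep G fi v c)
    (hg'_sep : ∀ p ∈ fi, ∀ c ∈ e, Sep G g' p c) :
    ∀ c ∈ e, Sep G g' v c := by
  intro c hce
  by_contra hnot
  have hp : fi.out.1 ∈ fi := Sym2.out_fst_mem fi
  have hpc : Sep G g' fi.out.1 c := hg'_sep _ hp c hce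
  have hvp : Sep G g' v fi.out.1 := sep_of_sep_left (sep_symm hpc) (not_sep_symm hnot)
  exact three_point hT.isConnected hp (hfi_sep c hce) hvp hpc

/-- Trichotomy used in the forward direction: an edge separating `v` from `f`
either equals `g`, separates `v` from `g`, or separates `g` from `f`. -/
lemma forward_step (hT : G.IsTree) {g f h' : Sym2 V} {v : V}
    (hg : g ∈ G.edgeSet) (hf : f ∈ G.edgeSet)
    (hh'E : h' ∈ G.edgeSet) (hh'f : h' ≠ f) (hsep : ∀ c ∈ f, Sep G h' v c) :
    h' = g ∨ (h' ≠ g ∧ ∀ a ∈ g, Sep G h' v a) ∨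
      (h' ≠ g ∧ ∀ a ∈ g, ∀ c ∈ f, Sep G h' a c) := by
  by_cases hg' : h' = g
  · exact Or.inl hg'
  right
  have hpf : f.out.1 ∈ f := Sym2.out_fst_mem f
  have hpg : g.out.1 ∈ g := Sym2.out_fst_mem g
  by_cases hvg : Sep G h' v g.out.1
  · exact Or.inl ⟨hg', sep_vertex_closure hg hg' hpg hvg⟩
  · right
    have hs : Sep G h' g.out.1 f.out.1 := sep_of_sep_left (hsep _ hpf) hvg
    exact ⟨hg', sep_pair_closure hg hf hg' hh'f hpg hpf hs⟩



variable {V : Type*} {G : SimpleGraph V} {r : Sym2 V → ℕ}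

lemma adjSup_of_min_step (hT : G.IsTree)
    {g f h : Sym2 V} (hg : g ∈ G.edgeSet)
    (hf : AdjSup G r g f) (hh : AdjSup G r g h) (hne : h ≠ f) (hrh : r h < r f) :
    AdjSup G r h f := by
  obtain ⟨hfE, hrgf, hbf⟩ := hf
  obtain ⟨hhE, hrgh, hbh⟩ := hh
  refine ⟨hfE, hrh, ?_⟩
  intro g' hg'
  rw [mem_edgesBetween_iff hT.isConnected hhE hfE] at hg'
  obtain ⟨hg'E, hg'h, hg'f, hsep⟩ := hg'
  by_cases hg'g : g' = g
  · exact hg'g ▸ hrgh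
  · have hph : h.out.1 ∈ h := Sym2.out_fst_mem h
    have hpf : f.out.1 ∈ f := Sym2.out_fst_mem f
    have hpg : g.out.1 ∈ g := Sym2.out_fst_mem g
    have hsep1 : Sep G g' h.out.1 f.out.1 := hsep _ hph _ hpf
    by_cases hcase : Sep G g' g.out.1 h.out.1
    · have : g' ∈ edgesBetween G g h := by
        rw [mem_edgesBetween_iff hT.isConnected hg hhE]
        exact ⟨hg'E, hg'g, hg'h, sep_pair_closure hg hhE hg'g hg'h hpg hph hcase⟩
      exact lt_trans (hbh g' this) hrgh
    · have hs : Sep G g' g.out.1 f.out.1 := sep_of_sep_left hsep1 (not_sep_symm hcase)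
      have : g' ∈ edgesBetween G g f := by
        rw [mem_edgesBetween_iff hT.isConnected hg hfE]
        exact ⟨hg'E, hg'g, hg'f, sep_pair_closure hg hfE hg'g hg'f hpg hpf hs⟩
      exact lt_trans (hbf g' this) hrgh

lemma reflTransGen_of_adjSup [Fintype V] (hT : G.IsTree) (hr : Set.InjOn r G.edgeSet) :
    ∀ n (g f : Sym2 V), r f - r g ≤ n → g ∈ G.edgeSet → AdjSup G r g f →
      Relation.ReflTransGen (IsParent G r) g f := by
  intro n
  induction n with
  | zero =>
    intro g f hle hg hf
    exact absurd hle (by have := hf.2.1; omega)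
  | succ n ih =>
    intro g f hle hg hf
    haveI := finite_sym2 (V := V)
    have hfin : {f' | AdjSup G r g f'}.Finite := Set.toFinite _
    obtain ⟨h, hhS, hmin⟩ := Set.exists_min_image _ r hfin ⟨f, hf⟩
    have hpar : IsParent G r g h := ⟨hhS, fun g' hg' => hmin g' hg'⟩
    by_cases hef : h = f
    · exact hef ▸ Relation.ReflTransGen.single hpar
    · have hrh : r h < r f := lt_of_le_of_ne (hmin f hf) (fun heq => hef (hr hhS.1 hf.1 heq))
      have hf' : AdjSup G r h f := adjSup_of_min_step hT hg hf hhS hef hrh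
      have hle' : r f - r h ≤ n := by have := hhS.2.1; omega
      exact Relation.ReflTransGen.head hpar (ih h f hle' hhS.1 hf')

lemma spine_low (hT : G.IsTree) {v : V} {estar e : Sym2 V}
    (hE : estar ∈ G.edgeSet) (hv : v ∈ estar)
    (hsp : e ∈ spine G r estar) :
    e ∈ G.edgeSet ∧ ∀ g ∈ edgesBetweenEV G e v, r g < r e := by
  have hsp' : Relation.ReflTransGen (IsParent G r) estar e := hsp
  induction hsp' with
  | refl =>
    refine ⟨hE, ?_⟩
    intro g hgmem
    rw [mem_edgesBetweenEV_iff hT.isConnected hE v] at hgmem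
    exact absurd (hgmem.2.2 v hv) (not_sep_refl _ _)
  | @tail b c hab hbc ih =>
    obtain ⟨hbE, ihb⟩ := ih hab
    obtain ⟨⟨hcE, hrbc, hbetween⟩, -⟩ := hbc
    refine ⟨hcE, ?_⟩
    intro h' hmem
    rw [mem_edgesBetweenEV_iff hT.isConnected hcE v] at hmem
    obtain ⟨hh'E, hh'c, hsep⟩ := hmem
    rcases forward_step hT hbE hcE hh'E hh'c hsep with rfl | ⟨hne, hs⟩ | ⟨hne, hs⟩
    · exact hrbc
    · have : h' ∈ edgesBetweenEV G b v := by
        rw [mem_edgesBetweenEV_iff hT.isConnected hbE v]; exact ⟨hh'E, hne, hs⟩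
      exact lt_trans (ihb h' this) hrbc
    · have : h' ∈ edgesBetween G b c := by
        rw [mem_edgesBetween_iff hT.isConnected hbE hcE]; exact ⟨hh'E, hne, hh'c, hs⟩
      exact lt_trans (hbetween h' this) hrbc

lemma backward [Fintype V] (hT : G.IsTree) (hr : Set.InjOn r G.edgeSet)
    {v : V} {estar : Sym2 V} (hE : estar ∈ G.edgeSet) (hv : v ∈ estar)
    (hminE : ∀ f ∈ G.edgeSet, v ∈ f → r estar ≤ r f) :
    ∀ n (e : Sym2 V), r e < n → e ∈ G.edgeSet →
      (∀ g ∈ edgesBetweenEV G e v, r g < r e) → e ∈ spine G r estar := by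
  intro n
  induction n with
  | zero => intro e h _ _; exact absurd h (Nat.not_lt_zero _)
  | succ n ih =>
    intro e hre heE hlow
    by_cases hee : e = estar
    · exact hee ▸ Relation.ReflTransGen.refl
    by_cases hve : v ∈ e
    · have hrlt : r estar < r e :=
        lt_of_le_of_ne (hminE e heE hve) (fun heq => hee (hr hE heE heq).symm)
      have hadj : AdjSup G r estar e := by
        refine ⟨heE, hrlt, ?_⟩
        intro g' hg'
        rw [mem_edgesBetween_iff hT.isConnected hE heE] at hg'
        exact absurd (hg'.2.2.2 v hv v hve) (not_sep_refl _ _)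
      exact reflTransGen_of_adjSup hT hr (r e - r estar) estar e le_rfl hE hadj
    · obtain ⟨f0, hf0E, hf0e, hf0sep⟩ := first_edge hT heE hve
      have hf0mem : f0 ∈ edgesBetweenEV G e v := by
        rw [mem_edgesBetweenEV_iff hT.isConnected heE v]; exact ⟨hf0E, hf0e, hf0sep⟩
      haveI := finite_sym2 (V := V)
      have hfin : (edgesBetweenEV G e v).Finite := Set.toFinite _
      obtain ⟨fi, hfiS, hmax⟩ := Set.exists_max_image _ r hfin ⟨f0, hf0mem⟩
      have hfiS' := hfiS
      rw [mem_edgesBetweenEV_iff hT.isConnected heE v] at hfiS'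
      obtain ⟨hfiE, hfie, hfisep⟩ := hfiS'
      have hrfi : r fi < r e := hlow fi hfiS
      have hlowfi : ∀ g ∈ edgesBetweenEV G fi v, r g < r fi := by
        intro h' hmem
        rw [mem_edgesBetweenEV_iff hT.isConnected hfiE v] at hmem
        obtain ⟨hh'E, hh'fi, hh'sep⟩ := hmem
        obtain ⟨hh'e, hh'sepe⟩ := btwv_step hT heE hfisep hh'sep
        have : h' ∈ edgesBetweenEV G e v := by
          rw [mem_edgesBetweenEV_iff hT.isConnected heE v]; exact ⟨hh'E, hh'e, hh'sepe⟩
        exact lt_of_le_of_ne (hmax h' this) (fun heq => hh'fi (hr hh'E hfiE heq))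
      have hfisp : fi ∈ spine G r estar := ih fi (by omega) hfiE hlowfi
      have hadj : AdjSup G r fi e := by
        refine ⟨heE, hrfi, ?_⟩
        intro g' hg'
        rw [mem_edgesBetween_iff hT.isConnected hfiE heE] at hg'
        obtain ⟨hg'E, hg'fi, hg'e, hg'sep⟩ := hg'
        have : g' ∈ edgesBetweenEV G e v := by
          rw [mem_edgesBetweenEV_iff hT.isConnected heE v]
          exact ⟨hg'E, hg'e, btwv_of_between hT hfisep hg'sep⟩
        exact lt_of_le_of_ne (hmax g' this) (fun heq => hg'fi (hr hg'E hfiE heq))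
      exact Relation.ReflTransGen.trans hfisp
        (reflTransGen_of_adjSup hT hr (r e - r fi) fi e le_rfl hfiE hadj)



end SLDaux

/-- Spine-membership characterization used in SLD-Merge: if `e*` is the
minimum-rank edge incident to a vertex `v`, then an edge `e` lies on
`spine(e*)` iff every edge on the tree path from `e` to `v` (excluding `e`
itself) has rank less than `r e`. -/
theorem stmt14 [Fintype V] (G : SimpleGraph V) (hT : G.IsTree)
    (r : Sym2 V → ℕ) (hr : Set.InjOn r G.edgeSet)
    (v : V) (estar : Sym2 V)
    (hestar : estar ∈ G.edgeSet ∧ v ∈ estar ∧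
      ∀ f ∈ G.edgeSet, v ∈ f → r estar ≤ r f)
    (e : Sym2 V) (he : e ∈ G.edgeSet) :
    e ∈ spine G r estar ↔ ∀ g ∈ edgesBetweenEV G e v, r g < r e := by
  constructor
  · intro hsp; exact (SLDaux.spine_low hT hestar.1 hestar.2.1 hsp).2
  · intro hlow
    exact SLDaux.backward hT hr hestar.1 hestar.2.1 hestar.2.2 (r e + 1) e
      (Nat.lt_succ_self _) he hlow
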